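/- Let H be a nonzero complex Hilbert space, let B, C be bounded linear operators on H, and let r ≥ 2 be a real number. Then w_e(B, C)^{2r} ≤ (1/2)·w(B + C)^{2r} + (1/2)·w(B − C)^{2r} − 2^r·inf{ |Re(⟨Bx, x⟩·conj(⟨Cx, x⟩))|^r : x ∈ H, ‖x‖ = 1 }. -/

import Mathlib

open scoped InnerProductSpace
open ContinuousLinearMap
open scoped NNReal


private lemma keyNN (a b : ℝ≥0) (hba : b ≤ a) {r : ℝ} (hr : 2 ≤ r) :
    2 * a ^ r + 2 * b ^ r ≤ (a + b) ^ r + (a - b) ^ r := by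
  have hs : 1 ≤ r / 2 := by linarith
  have e : ∀ x : ℝ≥0, x ^ r = (x ^ (2:ℝ)) ^ (r/2) := fun x => by
    rw [← NNReal.rpow_mul]; congr 1; ring
  have h1 : a ^ r + b ^ r ≤ (a ^ (2:ℝ) + b ^ (2:ℝ)) ^ (r/2) := by
    rw [e a, e b]; exact NNReal.add_rpow_le_rpow_add _ _ hs
  have h2 : (1/2 : ℝ≥0) * (a+b) ^ (2:ℝ) + (1/2 : ℝ≥0) * (a-b) ^ (2:ℝ)
      = a ^ (2:ℝ) + b ^ (2:ℝ) := by
    apply NNReal.coe_injective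
    push_cast [NNReal.coe_sub hba]
    rw [show ((a:ℝ)+b) ^ (2:ℝ) = ((a:ℝ)+b) ^ (2:ℕ) by rw [← Real.rpow_natCast]; norm_num,
        show ((a:ℝ)-b) ^ (2:ℝ) = ((a:ℝ)-b) ^ (2:ℕ) by
          rw [← Real.rpow_natCast]; norm_num,
        show (a:ℝ) ^ (2:ℝ) = (a:ℝ) ^ (2:ℕ) by rw [← Real.rpow_natCast]; norm_num,
        show (b:ℝ) ^ (2:ℝ) = (b:ℝ) ^ (2:ℕ) by rw [← Real.rpow_natCast]; norm_num]
    ring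
  have h3 := NNReal.rpow_arith_mean_le_arith_mean2_rpow (1/2) (1/2)
      ((a+b) ^ (2:ℝ)) ((a-b) ^ (2:ℝ)) (add_halves 1) hs
  rw [h2, ← e, ← e] at h3
  calc 2 * a ^ r + 2 * b ^ r = 2 * (a ^ r + b ^ r) := by ring
    _ ≤ 2 * ((a ^ (2:ℝ) + b ^ (2:ℝ)) ^ (r/2)) := by
        exact mul_le_mul_right h1 2
    _ ≤ 2 * (1/2 * (a+b) ^ r + 1/2 * (a-b) ^ r) := mul_le_mul_right h3 2
    _ = (a + b) ^ r + (a - b) ^ r := by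
        rw [mul_add, ← mul_assoc, ← mul_assoc]; norm_num

private lemma keyR' (u v : ℝ) (hv : 0 ≤ v) (huv : v ≤ u) {r : ℝ} (hr : 2 ≤ r) :
    2 * u ^ r + 2 * v ^ r ≤ (u + v) ^ r + (u - v) ^ r := by
  lift v to ℝ≥0 using hv
  lift u to ℝ≥0 using v.coe_nonneg.trans huv
  have h' : v ≤ u := by exact_mod_cast huv
  have h := keyNN u v h' hr
  have := NNReal.coe_le_coe.2 h
  push_cast [NNReal.coe_sub h'] at this
  exact this

private lemma keyR (p q : ℝ) (hp : 0 ≤ p) (hq : 0 ≤ q) {r : ℝ} (hr : 2 ≤ r) :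
    ((p + q)/2) ^ r + (|p - q|/2) ^ r ≤ p ^ r / 2 + q ^ r / 2 := by
  rcases le_total q p with h | h
  · have h1 := keyR' ((p+q)/2) ((p-q)/2) (by linarith) (by linarith) hr
    rw [show (p+q)/2 + (p-q)/2 = p by ring, show (p+q)/2 - (p-q)/2 = q by ring] at h1
    rw [abs_of_nonneg (by linarith : (0:ℝ) ≤ p - q)]
    linarith
  · have h1 := keyR' ((p+q)/2) ((q-p)/2) (by linarith) (by linarith) hr
    rw [show (p+q)/2 + (q-p)/2 = q by ring, show (p+q)/2 - (q-p)/2 = p by ring] at h1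
    rw [abs_of_nonpos (by linarith : p - q ≤ (0:ℝ)), show -(p-q) = q - p by ring]
    linarith


variable {H : Type*} [NormedAddCommGroup H] [InnerProductSpace ℂ H]
  [CompleteSpace H] [Nontrivial H]

/-- The numerical radius of a bounded linear operator. -/
noncomputable def numRad (A : H →L[ℂ] H) : ℝ :=
  ⨆ x : {x : H // ‖x‖ = 1}, ‖⟪A x.1, x.1⟫_ℂ‖

/-- The Crawford number of a bounded linear operator. -/
noncomputable def crawford (A : H →L[ℂ] H) : ℝ :=
  ⨅ x : {x : H // ‖x‖ = 1}, ‖⟪A x.1, x.1⟫_ℂ‖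

/-- The Euclidean operator radius of a pair of bounded linear operators. -/
noncomputable def euclRad (B C : H →L[ℂ] H) : ℝ :=
  ⨆ x : {x : H // ‖x‖ = 1}, Real.sqrt (‖⟪B x.1, x.1⟫_ℂ‖ ^ 2 + ‖⟪C x.1, x.1⟫_ℂ‖ ^ 2)

/-- The absolute value `|A| = (A*A)^(1/2)` of a bounded linear operator. -/
noncomputable def opAbs (A : H →L[ℂ] H) : H →L[ℂ] H := CFC.sqrt (adjoint A * A)

/-- The real part `Re(A) = (A + A*)/2` of a bounded linear operator. -/
noncomputable def reOp (A : H →L[ℂ] H) : H →L[ℂ] H := (2 : ℂ)⁻¹ • (A + adjoint A)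

/-- The imaginary part `Im(A) = (A - A*)/(2i)` of a bounded linear operator. -/
noncomputable def imOp (A : H →L[ℂ] H) : H →L[ℂ] H := (2 * Complex.I)⁻¹ • (A - adjoint A)

theorem stmt17 (B C : H →L[ℂ] H) (r : ℝ) (hr : 2 ≤ r) :
    (euclRad B C) ^ (2 * r) ≤
      (1/2) * (numRad (B + C)) ^ (2 * r) + (1/2) * (numRad (B - C)) ^ (2 * r)
        - (2 : ℝ) ^ r *
          ⨅ x : {x : H // ‖x‖ = 1},
            |(⟪B x.1, x.1⟫_ℂ * (starRingEnd ℂ) ⟪C x.1, x.1⟫_ℂ).re| ^ r := by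

  have hr0 : (0:ℝ) < r := by linarith
  have h2r : (0:ℝ) < 2 * r := by linarith
  obtain ⟨v, hv⟩ := exists_norm_eq H (zero_le_one)
  have hS : Nonempty {x : H // ‖x‖ = 1} := ⟨⟨v, hv⟩⟩
  have bdd : ∀ A : H →L[ℂ] H,
      BddAbove (Set.range fun x : {x : H // ‖x‖ = 1} => ‖⟪A x.1, x.1⟫_ℂ‖) := by
    intro A
    refine ⟨‖A‖, ?_⟩
    rintro _ ⟨x, rfl⟩
    calc ‖⟪A x.1, x.1⟫_ℂ‖ ≤ ‖A x.1‖ * ‖x.1‖ := norm_inner_le_norm _ _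
      _ ≤ ‖A‖ * ‖x.1‖ * ‖x.1‖ := by gcongr; exact A.le_opNorm _
      _ = ‖A‖ := by rw [x.2]; ring
  have hnum : ∀ (A : H →L[ℂ] H) (x : {x : H // ‖x‖ = 1}),
      ‖⟪A x.1, x.1⟫_ℂ‖ ≤ numRad A := fun A x => le_ciSup (bdd A) x
  have hnum0 : ∀ A : H →L[ℂ] H, 0 ≤ numRad A :=
    fun A => le_trans (norm_nonneg _) (hnum A hS.some)
  set I : ℝ := ⨅ x : {x : H // ‖x‖ = 1},
      |(⟪B x.1, x.1⟫_ℂ * (starRingEnd ℂ) ⟪C x.1, x.1⟫_ℂ).re| ^ r with hI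
  have hIle : ∀ x : {x : H // ‖x‖ = 1},
      I ≤ |(⟪B x.1, x.1⟫_ℂ * (starRingEnd ℂ) ⟪C x.1, x.1⟫_ℂ).re| ^ r := fun x =>
    ciInf_le ⟨0, by rintro _ ⟨y, rfl⟩; exact Real.rpow_nonneg (abs_nonneg _) r⟩ x
  set M : ℝ := (1/2) * (numRad (B + C)) ^ (2 * r) + (1/2) * (numRad (B - C)) ^ (2 * r)
      - (2 : ℝ) ^ r * I with hM
  -- pointwise estimate
  have key : ∀ x : {x : H // ‖x‖ = 1},
      (Real.sqrt (‖⟪B x.1, x.1⟫_ℂ‖ ^ 2 + ‖⟪C x.1, x.1⟫_ℂ‖ ^ 2)) ^ (2 * r) ≤ M := by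
    intro x
    set b : ℂ := ⟪B x.1, x.1⟫_ℂ with hb
    set c : ℂ := ⟪C x.1, x.1⟫_ℂ with hc
    have hbc1 : ⟪(B + C) x.1, x.1⟫_ℂ = b + c := by
      simp [hb, hc, ContinuousLinearMap.add_apply, inner_add_left]
    have hbc2 : ⟪(B - C) x.1, x.1⟫_ℂ = b - c := by
      simp [hb, hc, ContinuousLinearMap.sub_apply, inner_sub_left]
    set s : ℝ := ‖b‖ ^ 2 + ‖c‖ ^ 2 with hs
    have hs0 : 0 ≤ s := by positivity
    set P : ℝ := ‖b + c‖ ^ 2 with hP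
    set Q : ℝ := ‖b - c‖ ^ 2 with hQ
    have hP0 : 0 ≤ P := by positivity
    have hQ0 : 0 ≤ Q := by positivity
    have nsq : ∀ z : ℂ, ‖z‖ ^ 2 = z.re ^ 2 + z.im ^ 2 := fun z => by
      rw [Complex.sq_norm, Complex.normSq_apply]; ring
    have hpar : s = (P + Q) / 2 := by
      rw [hs, hP, hQ, nsq, nsq, nsq, nsq]
      simp only [Complex.add_re, Complex.add_im, Complex.sub_re, Complex.sub_im]
      ring
    have hre : |(b * (starRingEnd ℂ) c).re| = |P - Q| / 4 := by
      have : (b * (starRingEnd ℂ) c).re = (P - Q) / 4 := by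
        rw [hP, hQ, nsq, nsq]
        simp only [Complex.mul_re, Complex.conj_re, Complex.conj_im,
          Complex.add_re, Complex.add_im, Complex.sub_re, Complex.sub_im]
        ring
      rw [this, abs_div]
      norm_num
    -- rewrite the sqrt power
    have lhs_eq : (Real.sqrt s) ^ (2 * r) = s ^ r := by
      rw [Real.sqrt_eq_rpow, ← Real.rpow_mul hs0]
      congr 1; ring
    rw [lhs_eq, hpar]
    have hkey := keyR P Q hP0 hQ0 hr
    have hterm : (|P - Q| / 2) ^ r = 2 ^ r * |(b * (starRingEnd ℂ) c).re| ^ r := by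
      rw [hre, ← Real.mul_rpow (by norm_num) (by positivity)]
      congr 1; ring
    have hPle : P ^ r ≤ numRad (B + C) ^ (2 * r) := by
      rw [hP, ← Real.rpow_natCast ‖b + c‖ 2, ← Real.rpow_mul (norm_nonneg _)]
      have hn := hnum (B + C) x
      rw [hbc1] at hn
      calc ‖b + c‖ ^ (((2:ℕ):ℝ) * r) ≤ numRad (B + C) ^ (((2:ℕ):ℝ) * r) :=
            Real.rpow_le_rpow (norm_nonneg _) hn (by positivity)
        _ = numRad (B + C) ^ (2 * r) := by norm_num
    have hQle : Q ^ r ≤ numRad (B - C) ^ (2 * r) := by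
      rw [hQ, ← Real.rpow_natCast ‖b - c‖ 2, ← Real.rpow_mul (norm_nonneg _)]
      have hn := hnum (B - C) x
      rw [hbc2] at hn
      calc ‖b - c‖ ^ (((2:ℕ):ℝ) * r) ≤ numRad (B - C) ^ (((2:ℕ):ℝ) * r) :=
            Real.rpow_le_rpow (norm_nonneg _) hn (by positivity)
        _ = numRad (B - C) ^ (2 * r) := by norm_num
    have h2I : 2 ^ r * I ≤ (|P - Q| / 2) ^ r := by
      rw [hterm]
      exact mul_le_mul_of_nonneg_left (hIle x) (by positivity)
    rw [hM]
    linarith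
  -- conclude by taking the supremum
  have hM0 : 0 ≤ M := le_trans (Real.rpow_nonneg (Real.sqrt_nonneg _) _) (key hS.some)
  have he0 : 0 ≤ euclRad B C := by
    rw [euclRad]
    exact Real.iSup_nonneg fun x => Real.sqrt_nonneg _
  have hsup : euclRad B C ≤ M ^ (1 / (2 * r)) := by
    rw [euclRad]
    apply ciSup_le
    intro x
    have h := key x
    calc Real.sqrt (‖⟪B x.1, x.1⟫_ℂ‖ ^ 2 + ‖⟪C x.1, x.1⟫_ℂ‖ ^ 2)
        = ((Real.sqrt (‖⟪B x.1, x.1⟫_ℂ‖ ^ 2 + ‖⟪C x.1, x.1⟫_ℂ‖ ^ 2)) ^ (2 * r))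
            ^ (1 / (2 * r)) := by
          rw [← Real.rpow_mul (Real.sqrt_nonneg _), mul_one_div, div_self h2r.ne',
            Real.rpow_one]
      _ ≤ M ^ (1 / (2 * r)) :=
          Real.rpow_le_rpow (Real.rpow_nonneg (Real.sqrt_nonneg _) _) h (by positivity)
  calc euclRad B C ^ (2 * r) ≤ (M ^ (1 / (2 * r))) ^ (2 * r) :=
        Real.rpow_le_rpow he0 hsup h2r.le
    _ = M := by
        rw [← Real.rpow_mul hM0, one_div, inv_mul_cancel₀ h2r.ne', Real.rpow_one]
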